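/- Let φ: G → K be a homomorphism of finite groups, U_K a complete K-set universe and U_G a complete G-set universe. Then for any two G-equivariant injective maps α₁, α₂: φ*(U_K) → U_G there exist G-equivariant injective maps β₁, β₂: U_G → U_G such that β₁ ∘ α₁ = β₂ ∘ α₂. -/
import Mathlib

/-- A complete `G`-set universe: a countable `G`-set into which every finite
`G`-set admits a `G`-equivariant injective map. -/
def IsCompleteUniverse (G : Type) [Group G] (U : Type) [MulAction G U] : Prop :=
  Countable U ∧
    ∀ (M : Type) [Fintype M] [MulAction G M],
      ∃ f : M → U, Function.Injective f ∧ ∀ (g : G) (m : M), f (g • m) = g • f m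

section Aux

variable {G U : Type} [Group G] [Finite G] [MulAction G U]

/-- Any finite `G`-set embeds equivariantly into a complete universe avoiding
any given finite set (pigeonhole on `Fin (S.card + 1)` disjoint copies). -/
lemma lemA (hU : IsCompleteUniverse G U) (M : Type) [Fintype M] [MulAction G M]
    (S : Finset U) :
    ∃ f : M → U, Function.Injective f ∧ (∀ (g : G) (m : M), f (g • m) = g • f m) ∧
      ∀ m, f m ∉ S := by
  classical
  set k := S.card + 1 with hk
  letI : MulAction G (Fin k × M) :=
    { smul := fun g p => (p.1, g • p.2)
      one_smul := fun p => by
        show (p.1, (1 : G) • p.2) = p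
        rw [one_smul]
      mul_smul := fun g h p => by
        show (p.1, (g * h) • p.2) = (p.1, g • h • p.2)
        rw [mul_smul] }
  obtain ⟨F, hF, hFe⟩ := hU.2 (Fin k × M)
  have : ∃ i : Fin k, ∀ m : M, F (i, m) ∉ S := by
    by_contra h
    push_neg at h
    choose ms hms using h
    have hle : (Finset.univ : Finset (Fin k)).card ≤ S.card := by
      apply Finset.card_le_card_of_injOn (fun i => F (i, ms i))
      · intro i _; exact hms i
      · intro i _ j _ hij
        have := hF hij
        exact congrArg Prod.fst this
    simp [hk] at hle
  obtain ⟨i, hi⟩ := this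
  refine ⟨fun m => F (i, m), ?_, ?_, hi⟩
  · intro m m' hmm
    have := hF hmm
    exact congrArg Prod.snd this
  · intro g m
    exact hFe g (i, m)

/-- Two disjoint equivariant embeddings of a finite `G`-set avoiding `S`. -/
lemma exists_pair (hU : IsCompleteUniverse G U) (M : Type) [Fintype M] [MulAction G M]
    (S : Finset U) :
    ∃ f : Bool → M → U,
      (∀ b, Function.Injective (f b)) ∧
      (∀ b (g : G) (m : M), f b (g • m) = g • f b m) ∧
      (∀ b m, f b m ∉ S) ∧
      (∀ m m', f true m ≠ f false m') := by
  classical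
  obtain ⟨f₁, hf₁, he₁, ha₁⟩ := lemA hU M S
  obtain ⟨f₂, hf₂, he₂, ha₂⟩ := lemA hU M (S ∪ Finset.univ.image f₁)
  refine ⟨fun b => bif b then f₁ else f₂, ?_, ?_, ?_, ?_⟩
  · intro b; cases b <;> simpa
  · intro b g m; cases b
    · exact he₂ g m
    · exact he₁ g m
  · intro b m; cases b
    · intro hm
      exact ha₂ m (Finset.mem_union_left _ hm)
    · exact ha₁ m
  · intro m m' hmm
    simp only [cond] at hmm
    apply ha₂ m'
    apply Finset.mem_union_right
    rw [Finset.mem_image]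
    exact ⟨m, Finset.mem_univ m, hmm⟩

variable (G) (e : U → ℕ)

/-- The level of `u`: least code of an element in the orbit of `u`. -/
noncomputable def cc (u : U) : ℕ :=
  sInf {m | ∃ v, e v = m ∧ u ∈ MulAction.orbit G v}

lemma cc_spec (u : U) : ∃ v, e v = cc G e u ∧ u ∈ MulAction.orbit G v :=
  Nat.sInf_mem (⟨e u, u, rfl, MulAction.mem_orbit_self u⟩ :
    Set.Nonempty {m | ∃ v, e v = m ∧ u ∈ MulAction.orbit G v})

lemma smul_orbit_iff (g : G) (u v : U) :
    g • u ∈ MulAction.orbit G v ↔ u ∈ MulAction.orbit G v := by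
  simp only [MulAction.mem_orbit_iff]
  constructor
  · rintro ⟨h, hh⟩
    exact ⟨g⁻¹ * h, by rw [mul_smul, hh, inv_smul_smul]⟩
  · rintro ⟨h, hh⟩
    exact ⟨g * h, by rw [mul_smul, hh]⟩

lemma cc_smul (g : G) (u : U) : cc G e (g • u) = cc G e u := by
  apply le_antisymm
  · obtain ⟨v, hv, hw⟩ := cc_spec G e u
    exact Nat.sInf_le ⟨v, hv, (smul_orbit_iff G g u v).mpr hw⟩
  · obtain ⟨v, hv, hw⟩ := cc_spec G e (g • u)
    exact Nat.sInf_le ⟨v, hv, (smul_orbit_iff G g u v).mp hw⟩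

/-- The `n`-th level set. -/
def L (n : ℕ) : Set U := {u | cc G e u = n}

variable (he : Function.Injective e)

include he in
lemma L_finite (n : ℕ) : (L G e n).Finite := by
  rcases Set.eq_empty_or_nonempty (L G e n) with h | ⟨u, hu⟩
  · simp [h]
  · obtain ⟨v, hv, hw⟩ := cc_spec G e u
    apply Set.Finite.subset (Set.finite_range (fun g : G => g • v))
    intro u' hu'
    obtain ⟨v', hv', hw'⟩ := cc_spec G e u'
    have hvv : v' = v := he (by rw [hv', hv, hu', hu])
    rw [hvv] at hw'
    exact hw'

/-- `G`-action on a level set. -/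
def Lact (n : ℕ) : MulAction G (L G e n) :=
  { smul := fun g x => ⟨g • x.1, by
      have := x.2
      simp only [L, Set.mem_setOf_eq] at this ⊢
      rw [cc_smul, this]⟩
    one_smul := fun x => Subtype.ext (one_smul G x.1)
    mul_smul := fun g h x => Subtype.ext (mul_smul g h x.1) }

/-- Disjoint pair of equivariant embeddings of the `n`-th level, avoiding `S`. -/
noncomputable def E (hU : IsCompleteUniverse G U) (n : ℕ) (S : Finset U) :
    Bool → L G e n → U :=
  letI := (L_finite G e he n).fintype
  letI := Lact G e n
  Classical.choose (exists_pair hU (L G e n) S)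

lemma E_spec (hU : IsCompleteUniverse G U) (n : ℕ) (S : Finset U) :
    (∀ b, Function.Injective (E G e he hU n S b)) ∧
    (∀ b (g : G) (u : U) (h : cc G e u = n),
      E G e he hU n S b ⟨g • u, (cc_smul G e g u).trans h⟩ = g • E G e he hU n S b ⟨u, h⟩) ∧
    (∀ b x, E G e he hU n S b x ∉ S) ∧
    (∀ x y, E G e he hU n S true x ≠ E G e he hU n S false y) := by
  letI := (L_finite G e he n).fintype
  letI := Lact G e n
  obtain ⟨h1, h2, h3, h4⟩ := Classical.choose_spec (exists_pair hU (L G e n) S)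
  refine ⟨h1, ?_, h3, h4⟩
  intro b g u h
  have := h2 b g ⟨u, h⟩
  exact this

/-- Image of the `n`-th level pair. -/
noncomputable def imgAt (hU : IsCompleteUniverse G U) (n : ℕ) (S : Finset U) : Finset U :=
  letI := Classical.decEq U
  letI := (L_finite G e he n).fintype
  Finset.univ.image (E G e he hU n S true) ∪ Finset.univ.image (E G e he hU n S false)

/-- Accumulated images below level `n`. -/
noncomputable def Sf (hU : IsCompleteUniverse G U) : ℕ → Finset U
  | 0 => ∅
  | n + 1 =>
      letI := Classical.decEq U
      Sf hU n ∪ imgAt G e he hU n (Sf hU n)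

lemma Sf_mono (hU : IsCompleteUniverse G U) {m n : ℕ} (h : m ≤ n) :
    Sf G e he hU m ⊆ Sf G e he hU n := by
  classical
  induction h with
  | refl => exact Finset.Subset.refl _
  | step h ih =>
      refine ih.trans ?_
      show Sf G e he hU _ ⊆ Sf G e he hU (_ + 1)
      rw [Sf]
      exact Finset.subset_union_left

lemma imgAt_subset_Sf (hU : IsCompleteUniverse G U) {m n : ℕ} (h : m < n) :
    imgAt G e he hU m (Sf G e he hU m) ⊆ Sf G e he hU n := by
  classical
  refine Finset.Subset.trans ?_ (Sf_mono G e he hU h)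
  rw [Sf]
  exact Finset.subset_union_right

/-- Two disjoint `G`-equivariant self-injections of a complete universe. -/
lemma exists_two (hU : IsCompleteUniverse G U) :
    ∃ j₁ j₂ : U → U,
      Function.Injective j₁ ∧ Function.Injective j₂ ∧
      (∀ (g : G) (u : U), j₁ (g • u) = g • j₁ u) ∧
      (∀ (g : G) (u : U), j₂ (g • u) = g • j₂ u) ∧
      (∀ u v, j₁ u ≠ j₂ v) := by
  classical
  haveI : Countable U := hU.1
  obtain ⟨e, he⟩ : ∃ e : U → ℕ, Function.Injective e := exists_injective_nat U
  set jj : Bool → U → U :=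
    fun b u => E G e he hU (cc G e u) (Sf G e he hU (cc G e u)) b ⟨u, rfl⟩ with hjj
  have jdef : ∀ b u n (h : cc G e u = n),
      jj b u = E G e he hU n (Sf G e he hU n) b ⟨u, h⟩ := by
    intro b u n h
    subst h
    rfl
  have jeq : ∀ b (g : G) u, jj b (g • u) = g • jj b u := by
    intro b g u
    rw [jdef b (g • u) (cc G e u) (cc_smul G e g u)]
    exact (E_spec G e he hU (cc G e u) _).2.1 b g u rfl
  have jmem : ∀ b u, jj b u ∈ imgAt G e he hU (cc G e u) (Sf G e he hU (cc G e u)) := by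
    intro b u
    unfold imgAt
    letI := (L_finite G e he (cc G e u)).fintype
    cases b
    · apply Finset.mem_union_right
      rw [Finset.mem_image]
      exact ⟨⟨u, rfl⟩, Finset.mem_univ _, rfl⟩
    · apply Finset.mem_union_left
      rw [Finset.mem_image]
      exact ⟨⟨u, rfl⟩, Finset.mem_univ _, rfl⟩
  have javoid : ∀ b u, jj b u ∉ Sf G e he hU (cc G e u) := by
    intro b u
    exact (E_spec G e he hU (cc G e u) _).2.2.1 b _
  have jlt : ∀ b b' u v, cc G e u < cc G e v → jj b u ≠ jj b' v := by
    intro b b' u v hlt hne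
    apply javoid b' v
    rw [← hne]
    exact imgAt_subset_Sf G e he hU hlt (jmem b u)
  have jinj : ∀ b b' u v, jj b u = jj b' v → b = b' ∧ u = v := by
    intro b b' u v hne
    have hc : cc G e u = cc G e v := by
      rcases lt_trichotomy (cc G e u) (cc G e v) with h | h | h
      · exact absurd hne (jlt b b' u v h)
      · exact h
      · exact absurd hne.symm (jlt b' b v u h)
    rw [jdef b u (cc G e v) hc, jdef b' v (cc G e v) rfl] at hne
    obtain ⟨h1, _, _, h4⟩ := E_spec G e he hU (cc G e v) (Sf G e he hU (cc G e v))
    cases b <;> cases b'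
    · refine ⟨rfl, ?_⟩
      have := h1 false hne
      exact congrArg Subtype.val this
    · exact absurd hne.symm (h4 _ _)
    · exact absurd hne (h4 _ _)
    · refine ⟨rfl, ?_⟩
      have := h1 true hne
      exact congrArg Subtype.val this
  refine ⟨jj true, jj false, ?_, ?_, jeq true, jeq false, ?_⟩
  · intro u v h
    exact (jinj true true u v h).2
  · intro u v h
    exact (jinj false false u v h).2
  · intro u v h
    exact Bool.noConfusion (jinj true false u v h).1

end Aux

/-- Let `φ : G → K` be a homomorphism of finite groups, `U_K` a
complete `K`-set universe and `U_G` a complete `G`-set universe. Any two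
`G`-equivariant injections `α₁, α₂ : φ*(U_K) → U_G` are coequalized by
`G`-equivariant self-injections of `U_G`: there are `G`-equivariant injections
`β₁, β₂ : U_G → U_G` with `β₁ ∘ α₁ = β₂ ∘ α₂`.
(`G`-equivariance of `αᵢ` on the restricted `G`-set `φ*(U_K)` means
`αᵢ (φ g • v) = g • αᵢ v`.) -/
theorem stmt7 {G K : Type} [Group G] [Finite G] [Group K] [Finite K]
    (φ : G →* K) (UK UG : Type) [MulAction K UK] [MulAction G UG]
    (hUK : IsCompleteUniverse K UK) (hUG : IsCompleteUniverse G UG)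
    (α₁ α₂ : UK → UG)
    (h₁ : Function.Injective α₁) (h₂ : Function.Injective α₂)
    (e₁ : ∀ (g : G) (v : UK), α₁ (φ g • v) = g • α₁ v)
    (e₂ : ∀ (g : G) (v : UK), α₂ (φ g • v) = g • α₂ v) :
    ∃ β₁ β₂ : UG → UG,
      Function.Injective β₁ ∧ Function.Injective β₂ ∧
      (∀ (g : G) (u : UG), β₁ (g • u) = g • β₁ u) ∧
      (∀ (g : G) (u : UG), β₂ (g • u) = g • β₂ u) ∧
      β₁ ∘ α₁ = β₂ ∘ α₂ := by
  classical
  obtain ⟨j₁, j₂, hj₁, hj₂, hje₁, hje₂, hdisj⟩ := exists_two G hUG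
  set β₂ : UG → UG := fun u =>
    if h : ∃ v, α₂ v = u then j₁ (α₁ (Classical.choose h)) else j₂ u with hβ₂
  refine ⟨j₁, β₂, hj₁, ?_, hje₁, ?_, ?_⟩
  · -- injectivity of β₂
    intro u u' huu
    simp only [hβ₂] at huu
    by_cases h : ∃ v, α₂ v = u <;> by_cases h' : ∃ v, α₂ v = u'
    · rw [dif_pos h, dif_pos h'] at huu
      have := h₁ (hj₁ huu)
      rw [← Classical.choose_spec h, ← Classical.choose_spec h', this]
    · rw [dif_pos h, dif_neg h'] at huu
      exact absurd huu (hdisj _ _)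
    · rw [dif_neg h, dif_pos h'] at huu
      exact absurd huu.symm (hdisj _ _)
    · rw [dif_neg h, dif_neg h'] at huu
      exact hj₂ huu
  · -- equivariance of β₂
    intro g u
    by_cases h : ∃ v, α₂ v = u
    · have h' : ∃ v, α₂ v = g • u := by
        obtain ⟨v, hv⟩ := h
        exact ⟨φ g • v, by rw [e₂, hv]⟩
      rw [hβ₂]
      simp only [dif_pos h, dif_pos h']
      have hcc : Classical.choose h' = φ g • Classical.choose h := by
        apply h₂
        rw [Classical.choose_spec h', e₂, Classical.choose_spec h]
      rw [hcc, e₁, hje₁]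
    · have h' : ¬∃ v, α₂ v = g • u := by
        rintro ⟨v, hv⟩
        apply h
        refine ⟨φ g⁻¹ • v, ?_⟩
        have := e₂ g⁻¹ v
        rw [this, hv, inv_smul_smul]
      rw [hβ₂]
      simp only [dif_neg h, dif_neg h']
      exact hje₂ g u
  · -- coequalizing
    funext v
    simp only [Function.comp_apply, hβ₂]
    have h : ∃ w, α₂ w = α₂ v := ⟨v, rfl⟩
    rw [dif_pos h]
    have : Classical.choose h = v := h₂ (Classical.choose_spec h)
    rw [this]
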